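/- The symmetric separable rank is lower semicontinuous: if ρ_k ∈ M_d(ℂ)^{⊗n} satisfy ρ_k = ∑_{α=1}^r σ_{α,k}^{⊗n} with σ_{α,k} psd, and ρ_k → ρ, then ρ = ∑_{α=1}^r σ_α^{⊗n} for some psd matrices σ_α. -/

import Mathlib

open scoped ComplexOrder
open Filter Matrix

private lemma psd_diag_nonneg' {d : ℕ} {M : Matrix (Fin d) (Fin d) ℂ} (h : M.PosSemidef)
    (i : Fin d) : 0 ≤ M i i := by
  simpa [dotProduct, Pi.single_apply] using h.dotProduct_mulVec_nonneg (Pi.single i 1)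

private lemma nonneg_of_tendsto' (f : ℕ → ℂ) (z : ℂ) (h : ∀ k, 0 ≤ f k)
    (hf : Tendsto f atTop (nhds z)) : 0 ≤ z := by
  rw [Complex.le_def] at *
  constructor
  · exact ge_of_tendsto' ((Complex.continuous_re.tendsto _).comp hf) fun k => (h k).1
  · exact (tendsto_nhds_unique ((Complex.continuous_im.tendsto _).comp hf)
      (tendsto_const_nhds.congr fun k => ((h k).2 : (0:ℂ).im = (f k).im))).symm

private lemma psd_entry_bound' {d : ℕ} {M : Matrix (Fin d) (Fin d) ℂ} (h : M.PosSemidef)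
    (i j : Fin d) : ‖M i j‖ ≤ (M i i).re + (M j j).re := by
  obtain ⟨B, rfl⟩ : ∃ B : Matrix (Fin d) (Fin d) ℂ, M = Bᴴ * B :=
    by open scoped MatrixOrder Matrix.Norms.L2Operator in
      exact CStarAlgebra.nonneg_iff_eq_star_mul_self.mp h.nonneg
  have hd : ∀ p : Fin d, ((Bᴴ * B) p p).re = ∑ k, ‖B k p‖ ^ 2 := by
    intro p
    simp only [Matrix.mul_apply, Matrix.conjTranspose_apply, Complex.re_sum]
    refine Finset.sum_congr rfl fun k _ => ?_
    rw [Complex.star_def, ← Complex.normSq_eq_conj_mul_self, Complex.normSq_eq_norm_sq,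
      Complex.ofReal_re]
  have hij : (Bᴴ * B) i j = ∑ k, star (B k i) * B k j := by
    simp [Matrix.mul_apply, Matrix.conjTranspose_apply]
  rw [hij, hd, hd]
  calc ‖∑ k, star (B k i) * B k j‖
      ≤ ∑ k, ‖star (B k i) * B k j‖ := norm_sum_le _ _
    _ ≤ ∑ k, (‖B k i‖ ^ 2 + ‖B k j‖ ^ 2) := by
        refine Finset.sum_le_sum fun k _ => ?_
        rw [norm_mul, Complex.star_def, Complex.norm_conj]
        nlinarith [norm_nonneg (B k i), norm_nonneg (B k j),
          sq_nonneg (‖B k i‖ - ‖B k j‖)]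
    _ = _ := by rw [Finset.sum_add_distrib]

theorem symSepRank_lowerSemicontinuous (n d r : ℕ)
    (ρseq : ℕ → Matrix (Fin n → Fin d) (Fin n → Fin d) ℂ)
    (ρ : Matrix (Fin n → Fin d) (Fin n → Fin d) ℂ)
    (σ : ℕ → Fin r → Matrix (Fin d) (Fin d) ℂ)
    (hσ : ∀ k α, (σ k α).PosSemidef)
    (hdec : ∀ k j j', ρseq k j j' = ∑ α, ∏ i, σ k α (j i) (j' i))
    (hconv : Filter.Tendsto ρseq Filter.atTop (nhds ρ)) :
    ∃ τ : Fin r → Matrix (Fin d) (Fin d) ℂ,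
      (∀ α, (τ α).PosSemidef) ∧ ∀ j j', ρ j j' = ∑ α, ∏ i, τ α (j i) (j' i) := by
  have hconv_e : ∀ p q : Fin n → Fin d,
      Tendsto (fun k => ρseq k p q) atTop (nhds (ρ p q)) := fun p q =>
    tendsto_pi_nhds.mp (tendsto_pi_nhds.mp hconv p) q
  rcases Nat.eq_zero_or_pos n with hn | hn
  · -- trivial case n = 0
    subst hn
    refine ⟨fun _ => 0, fun _ => Matrix.PosSemidef.zero, fun j j' => ?_⟩
    have h2 : ∀ k, ρseq k j j' = (r : ℂ) := by
      intro k; rw [hdec k j j']; simp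
    have h1 := (hconv_e j j').congr fun k => h2 k
    have h3 : ρ j j' = (r : ℂ) := tendsto_nhds_unique (hconv_e j j')
      ((tendsto_const_nhds : Tendsto (fun _ : ℕ => (r:ℂ)) atTop (nhds (r:ℂ))).congr fun k => (h2 k).symm)
    rw [h3]; simp
  · -- main case n ≥ 1
    -- diagonal entries are nonnegative reals
    have hdiag : ∀ k α i, 0 ≤ (σ k α i i).re ∧ (σ k α i i).im = 0 := by
      intro k α i
      have := psd_diag_nonneg' (hσ k α) i
      rw [Complex.le_def] at this
      exact ⟨this.1, this.2.symm⟩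
    -- bound on the diagonal along the convergent sequence
    have hB : ∀ i : Fin d, ∃ b : ℝ, ∀ k, (ρseq k (fun _ => i) (fun _ => i)).re ≤ b := by
      intro i
      obtain ⟨b, hb⟩ := ((Complex.continuous_re.tendsto _).comp
        (hconv_e (fun _ => i) (fun _ => i))).bddAbove_range
      exact ⟨b, fun k => hb ⟨k, rfl⟩⟩
    choose B hB using hB
    -- key: (σ k α i i).re ≤ max 1 (B i)
    have hkey : ∀ k α i, (σ k α i i).re ≤ max 1 (B i) := by
      intro k α i
      set x : ℝ := (σ k α i i).re with hx
      have hre : ∀ β, σ k β i i = ((((σ k β i i).re : ℝ)) : ℂ) := by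
        intro β; exact Complex.ext rfl (by simp [(hdiag k β i).2])
      have hsum : (ρseq k (fun _ => i) (fun _ => i)).re = ∑ β, ((σ k β i i).re) ^ n := by
        rw [hdec k]
        have : ∀ β : Fin r, (∏ _l : Fin n, σ k β i i) = ((((σ k β i i).re) ^ n : ℝ) : ℂ) := by
          intro β
          rw [Finset.prod_const, Finset.card_univ, Fintype.card_fin]
          rw [hre β, ← Complex.ofReal_pow]
          simp
        rw [Finset.sum_congr rfl fun β _ => this β, ← Complex.ofReal_sum, Complex.ofReal_re]
      have hxn : x ^ n ≤ B i := by
        calc x ^ n ≤ ∑ β, ((σ k β i i).re) ^ n :=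
              Finset.single_le_sum (f := fun β => ((σ k β i i).re) ^ n)
                (fun β _ => pow_nonneg (hdiag k β i).1 n) (Finset.mem_univ α)
          _ = (ρseq k (fun _ => i) (fun _ => i)).re := hsum.symm
          _ ≤ B i := hB i k
      rcases le_or_gt x 1 with h1 | h1
      · exact le_trans h1 (le_max_left _ _)
      · refine le_trans ?_ (le_max_right _ _)
        calc x ≤ x ^ n := le_self_pow₀ h1.le hn.ne'
          _ ≤ B i := hxn
    set C : ℝ := ∑ i : Fin d, max 1 (B i) with hC
    have hCnn : 0 ≤ C := Finset.sum_nonneg fun i _ => le_trans zero_le_one (le_max_left _ _)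
    have hCi : ∀ i : Fin d, max 1 (B i) ≤ C :=
      fun i => Finset.single_le_sum (f := fun i => max 1 (B i))
        (fun j _ => le_trans zero_le_one (le_max_left _ _)) (Finset.mem_univ i)
    -- uniform bound on all entries
    have hbd : ∀ k α i j, ‖σ k α i j‖ ≤ 2 * C := by
      intro k α i j
      calc ‖σ k α i j‖ ≤ (σ k α i i).re + (σ k α j j).re :=
            psd_entry_bound' (hσ k α) i j
        _ ≤ C + C := add_le_add (le_trans (hkey k α i) (hCi i)) (le_trans (hkey k α j) (hCi j))
        _ = 2 * C := by ring
    -- compactness argument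
    set x : ℕ → (Fin r → Fin d → Fin d → ℂ) := fun k α i j => σ k α i j with hxdef
    have hx : ∀ k, x k ∈ Metric.closedBall (0 : Fin r → Fin d → Fin d → ℂ) (2 * C) := by
      intro k
      rw [Metric.mem_closedBall]
      rw [dist_pi_le_iff (by linarith)]
      intro α
      rw [dist_pi_le_iff (by linarith)]
      intro i
      rw [dist_pi_le_iff (by linarith)]
      intro j
      rw [Pi.zero_apply, Pi.zero_apply, Pi.zero_apply, dist_zero_right]
      exact hbd k α i j
    obtain ⟨a, -, φ, hφ, hlim⟩ :=
      (isCompact_closedBall (0 : Fin r → Fin d → Fin d → ℂ) (2 * C)).tendsto_subseq hx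
    have hent : ∀ α i j, Tendsto (fun k => σ (φ k) α i j) atTop (nhds (a α i j)) := by
      intro α i j
      exact tendsto_pi_nhds.mp (tendsto_pi_nhds.mp (tendsto_pi_nhds.mp hlim α) i) j
    refine ⟨fun α => Matrix.of (a α), fun α => ?_, fun j j' => ?_⟩
    · refine Matrix.PosSemidef.of_dotProduct_mulVec_nonneg ?_ ?_
      · -- Hermitian
        ext i j
        rw [Matrix.conjTranspose_apply]
        refine tendsto_nhds_unique ?_ (hent α i j)
        have := (continuous_star.tendsto _).comp (hent α j i)
        refine this.congr fun k => ?_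
        exact (hσ (φ k) α).isHermitian.apply i j
      · -- quadratic form nonneg
        intro v
        refine nonneg_of_tendsto' (fun k => star v ⬝ᵥ (σ (φ k) α).mulVec v) _
          (fun k => (hσ (φ k) α).dotProduct_mulVec_nonneg v) ?_
        simp only [dotProduct, Matrix.mulVec, Pi.star_apply]
        exact tendsto_finset_sum _ fun i _ =>
          tendsto_const_nhds.mul (tendsto_finset_sum _ fun j _ =>
            (hent α i j).mul tendsto_const_nhds)
    · -- decomposition of ρ
      refine tendsto_nhds_unique ((hconv_e j j').comp hφ.tendsto_atTop) ?_
      have : ∀ k, ρseq (φ k) j j' = ∑ α, ∏ i, σ (φ k) α (j i) (j' i) := fun k => hdec (φ k) j j'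
      refine Tendsto.congr (fun k => (this k).symm) ?_
      exact tendsto_finset_sum _ fun α _ =>
        tendsto_finset_prod _ fun i _ => hent α (j i) (j' i)
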